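/- Let (Ω, 𝔽, ℙ) be a probability space and H a real inner product space that is a complete normed space (a real Hilbert space). Let g : Ω → H be Bochner integrable, and let C : Ω → ℝ be integrable with C > 0 almost surely and such that C·g is Bochner integrable. Define v := 𝔼[g] and Z := ⟨g, v⟩, and suppose Cov(C, Z) := 𝔼[C·Z] − 𝔼[C]·𝔼[Z] ≥ 0 and v ≠ 0. Then ⟨𝔼[C·g], v⟩ > 0. -/

import Mathlib

open MeasureTheory

/-- Gradient Alignment and Effectiveness of HACPO (abstract form): if `C > 0` a.s.,
`Cov(C, Z) ≥ 0` and `v ≠ 0`, then `⟨𝔼[C·g], v⟩ > 0`. -/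
theorem hacpo_gradient_alignment
    {Ω : Type*} [MeasurableSpace Ω] (P : Measure Ω) [IsProbabilityMeasure P]
    {H : Type*} [NormedAddCommGroup H] [InnerProductSpace ℝ H] [CompleteSpace H]
    (g : Ω → H) (C : Ω → ℝ)
    (hg : Integrable g P) (hC : Integrable C P)
    (hCpos : ∀ᵐ x ∂P, 0 < C x)
    (hCg : Integrable (fun x => C x • g x) P)
    (hcov : (∫ x, C x * (inner ℝ (g x) (∫ y, g y ∂P) : ℝ) ∂P)
        - (∫ x, C x ∂P) * (∫ x, (inner ℝ (g x) (∫ y, g y ∂P) : ℝ) ∂P) ≥ 0)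
    (hv : (∫ y, g y ∂P) ≠ 0) :
    (inner ℝ (∫ x, C x • g x ∂P) (∫ y, g y ∂P) : ℝ) > 0 := by
  set v := ∫ y, g y ∂P with hvdef
  have h1 : (inner ℝ (∫ x, C x • g x ∂P) v : ℝ) = ∫ x, C x * (inner ℝ (g x) v : ℝ) ∂P := by
    rw [real_inner_comm, ← integral_inner hCg v]
    congr 1; ext x
    rw [real_inner_comm, real_inner_smul_left]
  have h2 : (∫ x, (inner ℝ (g x) v : ℝ) ∂P) = ‖v‖ ^ 2 := by
    have h := integral_inner (𝕜 := ℝ) hg v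
    calc (∫ x, (inner ℝ (g x) v : ℝ) ∂P) = ∫ x, (inner ℝ v (g x) : ℝ) ∂P := by
          congr 1; ext x; rw [real_inner_comm]
      _ = inner ℝ v v := h
      _ = ‖v‖ ^ 2 := real_inner_self_eq_norm_sq v
  have hEC : 0 < ∫ x, C x ∂P := by
    refine (integral_pos_iff_support_of_nonneg_ae (hCpos.mono fun x hx => hx.le) hC).2 ?_
    have hc0 : P (Function.support C)ᶜ = 0 := by
      refine measure_mono_null ?_ (ae_iff.1 hCpos)
      intro x hx
      simp only [Function.support, Set.mem_compl_iff, Set.mem_setOf_eq, not_not] at hx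
      simp [hx]
    by_contra h
    push_neg at h
    have hs0 : P (Function.support C) = 0 := le_antisymm h bot_le
    have := measure_union_le (μ := P) (Function.support C) (Function.support C)ᶜ
    rw [Set.union_compl_self, hs0, hc0, measure_univ] at this
    simp at this
  have hnv : (0:ℝ) < ‖v‖ ^ 2 := pow_pos (norm_pos_iff.2 hv) 2
  rw [h1]
  have := hcov
  rw [h2] at this
  nlinarith
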